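/- Let f be a monotone submodular set function on a finite ground set V, let S, T ⊆ V be finite subsets with T nonempty, and let x* ∈ V be an element maximizing the marginal gain, i.e. f(S ∪ {x*}) ≥ f(S ∪ {y}) for every y ∈ V. Then f(S ∪ {x*}) − f(S) ≥ (f(T) − f(S)) / |T|. -/

import Mathlib

/-- **Greedy marginal-gain lower bound.**
Let `f` be a monotone submodular set function on a finite ground set `V`, let
`S, T ⊆ V` be finite subsets with `T` nonempty, and let `x*` maximize the
marginal gain: `f (S ∪ {x*}) ≥ f (S ∪ {y})` for every `y ∈ V`.  Then
`f (S ∪ {x*}) − f S ≥ (f T − f S) / |T|`. -/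
theorem greedy_marginal_gain_bound {V : Type*} [Fintype V] [DecidableEq V]
    (f : Finset V → ℝ)
    (hmono : ∀ A B : Finset V, A ⊆ B → f A ≤ f B)
    (hsubmod : ∀ A B : Finset V, A ⊆ B → ∀ x ∉ B,
      f (insert x A) - f A ≥ f (insert x B) - f B)
    (S T : Finset V) (hT : T.Nonempty)
    (xstar : V) (hx : ∀ y : V, f (insert xstar S) ≥ f (insert y S)) :
    f (insert xstar S) - f S ≥ (f T - f S) / (T.card : ℝ) := by
  have key : ∀ U : Finset V, f (S ∪ U) - f S ≤ ∑ y ∈ U, (f (insert y S) - f S) := by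
    intro U
    induction U using Finset.induction_on with
    | empty => simp
    | insert a U' ha ih =>
      rw [Finset.sum_insert ha]
      have : f (S ∪ insert a U') - f (S ∪ U') ≤ f (insert a S) - f S := by
        by_cases haS : a ∈ S ∪ U'
        · have h1 : S ∪ insert a U' = S ∪ U' := by
            rw [Finset.union_insert, Finset.insert_eq_self.mpr haS]
          rw [h1]
          have := hmono S (insert a S) (Finset.subset_insert a S)
          linarith
        · have h1 : S ∪ insert a U' = insert a (S ∪ U') := by
            rw [Finset.union_insert]
          rw [h1]
          exact hsubmod S (S ∪ U') Finset.subset_union_left a haS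
      linarith
  have hgain : ∀ y ∈ T, f (insert y S) - f S ≤ f (insert xstar S) - f S := by
    intro y _
    have := hx y
    linarith
  have hsum : ∑ y ∈ T, (f (insert y S) - f S) ≤ T.card * (f (insert xstar S) - f S) := by
    calc ∑ y ∈ T, (f (insert y S) - f S) ≤ ∑ _y ∈ T, (f (insert xstar S) - f S) :=
          Finset.sum_le_sum hgain
      _ = T.card * (f (insert xstar S) - f S) := by
          rw [Finset.sum_const, nsmul_eq_mul]
  have hTf : f T ≤ f (S ∪ T) := hmono T (S ∪ T) Finset.subset_union_right
  have hpos : (0:ℝ) < T.card := by exact_mod_cast Finset.card_pos.mpr hT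
  rw [ge_iff_le, div_le_iff₀ hpos]
  have := key T
  nlinarith [hpos]
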